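/- Let T be a rooted phylogenetic X-tree, L a minimal topological lasso for T with Γ(L) a block graph, and v an interior vertex of T with associated block B_v (the unique block B with lca_T(V(B)) = v). Then the map sending each x ∈ V(B_v) to the child edge of v lying on the path from v to x is a graph isomorphism from B_v onto the child-edge graph G(L, v). -/

import Mathlib

open scoped Classical

/-- A rooted `X`-tree on vertex type `V`: a finite rooted tree encoded by a parent
function, whose leaves (the vertices with no children) are bijectively labelled by `X`. -/
structure XTree (X V : Type) where
  root : V
  parent : V → V
  parent_root : parent root = root
  reaches : ∀ v : V, ∃ n : ℕ, parent^[n] v = root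
  leaf : X → V
  leaf_inj : Function.Injective leaf
  leaf_iff : ∀ v : V, (∀ w : V, parent w = v → w = v) ↔ v ∈ Set.range leaf

namespace XTree

variable {X V : Type}

/-- The children of a vertex. -/
def children (T : XTree X V) (v : V) : Set V := {w | T.parent w = v ∧ w ≠ v}

def IsLeaf (T : XTree X V) (v : V) : Prop := v ∈ Set.range T.leaf

def Interior (T : XTree X V) (v : V) : Prop := ¬ T.IsLeaf v

/-- Phylogenetic: root has at least two children, and no non-root vertex has exactly
one child (no degree-two vertices apart from possibly the root). -/
def IsPhylo (T : XTree X V) : Prop :=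
  2 ≤ (T.children T.root).ncard ∧
    ∀ v : V, v ≠ T.root → T.Interior v → 2 ≤ (T.children v).ncard

/-- `T.Desc v w` : `w` is a descendant of `v` (or equal to `v`). -/
def Desc (T : XTree X V) (v w : V) : Prop := ∃ n : ℕ, T.parent^[n] w = v

/-- The set of leaf labels below a vertex. -/
def leafSet (T : XTree X V) (v : V) : Set X := {x | T.Desc v (T.leaf x)}

/-- `v` is the last common ancestor of the set `S` of vertices. -/
def IsLCA (T : XTree X V) (v : V) (S : Set V) : Prop :=
  (∀ w ∈ S, T.Desc v w) ∧ ∀ u : V, (∀ w ∈ S, T.Desc u w) → T.Desc u v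

/-- Not a star tree: some interior vertex other than the root. -/
def NonDegenerate (T : XTree X V) : Prop := ∃ v : V, T.Interior v ∧ v ≠ T.root

end XTree

/-- A cord: a 2-element subset of `X`. -/
def IsCord {X : Type} (c : Set X) : Prop := ∃ a b : X, a ≠ b ∧ c = {a, b}

/-- The graph `Γ(L)` with vertex set `X` and edge set `L`. -/
def cordGraph {X : Type} (L : Set (Set X)) : SimpleGraph X where
  Adj a b := a ≠ b ∧ ({a, b} : Set X) ∈ L
  symm := by
    constructor
    intro a b h
    exact ⟨Ne.symm h.1, by rw [Set.pair_comm]; exact h.2⟩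
  loopless := by constructor; intro a h; exact h.1 rfl

/-- Topological lasso, via the child-edge graph characterization: for every interior
vertex, any two distinct child subtrees are joined by a cord of `L`. -/
def XTree.IsTopoLasso {X V : Type} (T : XTree X V) (L : Set (Set X)) : Prop :=
  ∀ v c₁ c₂ : V, c₁ ∈ T.children v → c₂ ∈ T.children v → c₁ ≠ c₂ →
    ∃ a b : X, a ∈ T.leafSet c₁ ∧ b ∈ T.leafSet c₂ ∧ ({a, b} : Set X) ∈ L

/-- Set-inclusion minimal topological lasso. -/
def XTree.IsMinTopoLasso {X V : Type} (T : XTree X V) (L : Set (Set X)) : Prop :=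
  T.IsTopoLasso L ∧ ∀ L' ⊆ L, T.IsTopoLasso L' → L' = L

/-- A nonempty vertex set inducing a connected subgraph with no cut vertex. -/
def GoodSet {α : Type} (G : SimpleGraph α) (B : Set α) : Prop :=
  B.Nonempty ∧ (G.induce B).Connected ∧
    ∀ v ∈ B, (B \ {v}).Nonempty → (G.induce (B \ {v})).Connected

/-- A block: a maximal connected induced subgraph without a cut vertex. -/
def IsBlock {α : Type} (G : SimpleGraph α) (B : Set α) : Prop :=
  GoodSet G B ∧ ∀ C : Set α, GoodSet G C → B ⊆ C → B = C

/-- A block graph: every block is a clique. -/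
def IsBlockGraph {α : Type} (G : SimpleGraph α) : Prop :=
  ∀ B : Set α, IsBlock G B → G.IsClique B

/-- A cut vertex: deleting it disconnects the graph. -/
def IsCutVtx {α : Type} (G : SimpleGraph α) (v : α) : Prop :=
  ¬ (G.induce {w | w ≠ v}).Connected

/-- Claw-free: no induced `K_{1,3}`. -/
def ClawFree {α : Type} (G : SimpleGraph α) : Prop :=
  ¬ ∃ v a b c : α, a ≠ b ∧ a ≠ c ∧ b ≠ c ∧
    G.Adj v a ∧ G.Adj v b ∧ G.Adj v c ∧ ¬ G.Adj a b ∧ ¬ G.Adj a c ∧ ¬ G.Adj b c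

/-- The child-edge graph `G(L,v)`: vertices are the children of `v` (equivalently
the child edges of `v`), two of them adjacent if a cord of `L` joins their subtrees. -/
def childGraph {X V : Type} (T : XTree X V) (L : Set (Set X)) (v : V) :
    SimpleGraph {c : V // c ∈ T.children v} where
  Adj c₁ c₂ := c₁ ≠ c₂ ∧ ∃ a b : X,
    a ∈ T.leafSet (c₁ : V) ∧ b ∈ T.leafSet (c₂ : V) ∧ ({a, b} : Set X) ∈ L
  symm := by
    constructor
    rintro c₁ c₂ ⟨h, a, b, ha, hb, hm⟩
    exact ⟨Ne.symm h, b, a, hb, ha, by rw [Set.pair_comm]; exact hm⟩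
  loopless := by constructor; rintro c ⟨h, -⟩; exact h rfl

/-- `cl(T)`: the clusters of non-root interior vertices. -/
def clSet {X V : Type} (T : XTree X V) : Set (Set X) :=
  {A | ∃ v : V, v ≠ T.root ∧ T.Interior v ∧ A = T.leafSet v}

/-- A cluster marker map for `T` and the ordering of `X`:
`f A` is the `σ`-least element of `A` not used as marker of a proper subcluster. -/
def IsClusterMarker {X V : Type} [LinearOrder X] (T : XTree X V) (f : Set X → X) : Prop :=
  ∀ A ∈ clSet T,
    ((∃ B ∈ clSet T, B ⊂ A) →
      IsLeast (A \ {y | ∃ B ∈ clSet T, B ⊂ A ∧ f B = y}) (f A)) ∧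
    ((¬ ∃ B ∈ clSet T, B ⊂ A) → IsLeast A (f A))

/-- The marker of a child `c` of an interior vertex: the label of `c` if `c` is a leaf,
and `f (L(c))` if `c` is interior. -/
def markRel {X V : Type} (T : XTree X V) (f : Set X → X) (c : V) (a : X) : Prop :=
  T.leaf a = c ∨ (T.Interior c ∧ a = f (T.leafSet c))

/-- `L_{(T,f)}(v)`: all cords between markers of distinct children of `v`. -/
def lassoAt {X V : Type} (T : XTree X V) (f : Set X → X) (v : V) : Set (Set X) :=
  {c | ∃ c₁ c₂ : V, c₁ ∈ T.children v ∧ c₂ ∈ T.children v ∧ c₁ ≠ c₂ ∧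
    ∃ a b : X, markRel T f c₁ a ∧ markRel T f c₂ b ∧ c = {a, b}}

/-- `L_{(T,f)}`: the union over all interior vertices of `L_{(T,f)}(v)`. -/
def lassoFull {X V : Type} (T : XTree X V) (f : Set X → X) : Set (Set X) :=
  {c | ∃ v : V, T.Interior v ∧ c ∈ lassoAt T f v}

/-- An equidistant proper edge-weighting of `T`, encoded by the height function
`t v` = distance from `v` to any leaf below it (so all leaves are equidistant
from the root); properness: interior edges have positive weight. -/
def EquidistantProper {X V : Type} (T : XTree X V) (t : V → ℝ) : Prop :=
  (∀ x : X, t (T.leaf x) = 0) ∧ (∀ v : V, t v ≤ t (T.parent v)) ∧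
    ∀ v : V, v ≠ T.root → T.Interior v → t v < t (T.parent v)

/-- Equivalence of two `X`-trees: a root-, parent- and labelling-preserving bijection. -/
def TreeEquiv {X V V' : Type} (T : XTree X V) (T' : XTree X V') : Prop :=
  ∃ φ : V ≃ V', φ T.root = T'.root ∧ (∀ v, φ (T.parent v) = T'.parent (φ v)) ∧
    ∀ x, φ (T.leaf x) = T'.leaf x

/-- `S` is (equivalent to) the restriction `T|_Y`: the clusters of `S` are exactly the
nonempty traces on `Y` of the clusters of `T`. -/
def IsRestriction {X : Type} (Y : Set X) {V W : Type}
    (T : XTree X V) (S : XTree (↥Y) W) : Prop :=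
  ∀ A : Set X, A ⊆ Y →
    ((∃ w : W, A = Subtype.val '' S.leafSet w) ↔ (A.Nonempty ∧ ∃ v : V, A = T.leafSet v ∩ Y))

/-- The restriction `L|_Y` of a set of cords of `X` to cords of `Y`. -/
def restrictLasso {X : Type} (Y : Set X) (L : Set (Set X)) : Set (Set ↥Y) :=
  {c | ∃ a b : ↥Y, a ≠ b ∧ c = {a, b} ∧ ({(a : X), (b : X)} : Set X) ∈ L}


/-! ### Auxiliary machinery -/

section GraphAux

variable {α : Type} {G : SimpleGraph α}

/-- reachability within a set -/
def RTG (G : SimpleGraph α) (S : Set α) (a b : α) : Prop :=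
  Relation.ReflTransGen (fun p q => p ∈ S ∧ q ∈ S ∧ G.Adj p q) a b

lemma rtg_mono {S T : Set α} (h : S ⊆ T) {a b : α} (hr : RTG G S a b) : RTG G T a b :=
  by
    refine Relation.ReflTransGen.mono (r := fun p q => p ∈ S ∧ q ∈ S ∧ G.Adj p q)
      (p := fun p q => p ∈ T ∧ q ∈ T ∧ G.Adj p q) ?_ a b hr
    intro _ _ hpq
    exact ⟨h hpq.1, h hpq.2.1, hpq.2.2⟩

lemma rtg_symm {S : Set α} {a b : α} (hr : RTG G S a b) : RTG G S b a :=
  by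
    haveI : Std.Symm (fun p q => p ∈ S ∧ q ∈ S ∧ G.Adj p q) :=
      ⟨fun _ _ hpq => ⟨hpq.2.1, hpq.1, hpq.2.2.symm⟩⟩
    exact Std.Symm.symm (r := Relation.ReflTransGen (fun p q => p ∈ S ∧ q ∈ S ∧ G.Adj p q)) a b hr

lemma conn_of_rtg {S : Set α} (hne : S.Nonempty)
    (h : ∀ a ∈ S, ∀ b ∈ S, RTG G S a b) : (G.induce S).Connected := by
  haveI : Nonempty ↥S := ⟨⟨hne.choose, hne.choose_spec⟩⟩
  refine ⟨fun a b => ?_⟩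
  have key : ∀ p q : α, RTG G S p q → ∀ (hp : p ∈ S) (hq : q ∈ S),
      (G.induce S).Reachable ⟨p, hp⟩ ⟨q, hq⟩ := by
    intro p q hr
    induction hr with
    | refl => intro hp hq; rfl
    | @tail c d hr hstep ih =>
      intro hp hq
      exact (ih hp hstep.1).trans (SimpleGraph.Adj.reachable (by
        simp only [SimpleGraph.comap_adj]
        exact hstep.2.2))
  obtain ⟨a, ha⟩ := a
  obtain ⟨b, hb⟩ := b
  exact key a b (h a ha b hb) ha hb

lemma rtg_of_conn {S : Set α} (h : (G.induce S).Connected) :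
    ∀ a ∈ S, ∀ b ∈ S, RTG G S a b := by
  intro a ha b hb
  have hr : (G.induce S).Reachable ⟨a, ha⟩ ⟨b, hb⟩ := h.preconnected _ _
  obtain ⟨w⟩ := hr
  have key : ∀ (p q : ↥S) (_ : (G.induce S).Walk p q), RTG G S p.1 q.1 := by
    intro p q w
    induction w with
    | nil => exact Relation.ReflTransGen.refl
    | @cons u c q h _ ih =>
      exact Relation.ReflTransGen.head ⟨u.2, c.2, by simpa using h⟩ ih
  exact key _ _ w

lemma clique_goodSet {S : Set α} (hne : S.Nonempty) (hcl : G.IsClique S) : GoodSet G S := by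
  have conn : ∀ T : Set α, T ⊆ S → T.Nonempty → (G.induce T).Connected := by
    intro T hTS hTne
    refine conn_of_rtg hTne (fun a ha b hb => ?_)
    rcases eq_or_ne a b with rfl | hab
    · exact Relation.ReflTransGen.refl
    · exact Relation.ReflTransGen.single ⟨ha, hb, hcl (hTS ha) (hTS hb) hab⟩
  exact ⟨hne, conn S le_rfl hne, fun v _ h2 => conn _ Set.diff_subset h2⟩

lemma goodSet_insert {S : Set α} (hS : GoodSet G S) {u s₁ s₂ : α}
    (hu : u ∉ S) (hs₁ : s₁ ∈ S) (hs₂ : s₂ ∈ S) (hne : s₁ ≠ s₂)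
    (h1 : G.Adj u s₁) (h2 : G.Adj u s₂) : GoodSet G (S ∪ {u}) := by
  obtain ⟨hSne, hSc, hSdel⟩ := hS
  have hattach : ∀ T : Set α, T ⊆ S → (G.induce T).Connected →
      (s₁ ∈ T ∨ s₂ ∈ T) → (G.induce (T ∪ {u})).Connected := by
    intro T hTS hTc hsT
    have hrt := rtg_of_conn hTc
    have hTU : T ⊆ T ∪ {u} := Set.subset_union_left
    have humem : u ∈ T ∪ {u} := Or.inr rfl
    have hs : ∃ s ∈ T, G.Adj u s := by
      rcases hsT with h | h
      exacts [⟨s₁, h, h1⟩, ⟨s₂, h, h2⟩]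
    obtain ⟨s, hsT', hadj⟩ := hs
    have hstep : RTG G (T ∪ {u}) u s :=
      Relation.ReflTransGen.single ⟨humem, hTU hsT', hadj⟩
    refine conn_of_rtg ⟨u, humem⟩ (fun a ha b hb => ?_)
    have reach : ∀ c ∈ T ∪ {u}, RTG G (T ∪ {u}) c s := by
      intro c hc
      rcases hc with hc | hc
      · exact rtg_mono hTU (hrt c hc s hsT')
      · rcases hc with rfl; exact hstep
    exact (reach a ha).trans (rtg_symm (reach b hb))
  refine ⟨hSne.mono Set.subset_union_left, hattach S le_rfl hSc (Or.inl hs₁), ?_⟩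
  intro p hp hpne
  rcases eq_or_ne p u with rfl | hpu
  · have : (S ∪ {p}) \ {p} = S := by
      ext t; simp only [Set.mem_diff, Set.mem_union, Set.mem_singleton_iff]
      constructor
      · rintro ⟨h | h, hne'⟩; exact h; exact absurd h hne'
      · intro ht; exact ⟨Or.inl ht, fun he => hu (he ▸ ht)⟩
    rw [this]; exact hSc
  · have hpS : p ∈ S := by
      rcases hp with h | h; exact h; exact absurd h hpu
    have hSp : (S \ {p}).Nonempty := by
      rcases eq_or_ne s₁ p with rfl | h
      · exact ⟨s₂, hs₂, hne.symm⟩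
      · exact ⟨s₁, hs₁, h⟩
    have hconn := hSdel p hpS hSp
    have hset : (S ∪ {u}) \ {p} = (S \ {p}) ∪ {u} := by
      ext t
      simp only [Set.mem_diff, Set.mem_union, Set.mem_singleton_iff]
      constructor
      · rintro ⟨h | h, hne'⟩
        · exact Or.inl ⟨h, hne'⟩
        · exact Or.inr h
      · rintro (⟨h, hne'⟩ | h)
        · exact ⟨Or.inl h, hne'⟩
        · exact ⟨Or.inr h, fun he => hpu (he ▸ h)⟩
    rw [hset]
    refine hattach _ Set.diff_subset hconn ?_
    rcases eq_or_ne s₁ p with rfl | h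
    · exact Or.inr ⟨hs₂, hne.symm⟩
    · exact Or.inl ⟨hs₁, h⟩

lemma exists_block [Finite α] {C : Set α} (hC : GoodSet G C) :
    ∃ M : Set α, IsBlock G M ∧ C ⊆ M := by
  have hfin : ({D : Set α | GoodSet G D ∧ C ⊆ D}).Finite := Set.toFinite _
  obtain ⟨M, hM, hmax⟩ := hfin.exists_maximalFor Set.ncard _ ⟨C, hC, le_rfl⟩
  refine ⟨M, ⟨hM.1, fun D hD hMD => ?_⟩, hM.2⟩
  have hDm : D ∈ {D : Set α | GoodSet G D ∧ C ⊆ D} := ⟨hD, hM.2.trans hMD⟩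
  have hle : M.ncard ≤ D.ncard := Set.ncard_le_ncard hMD (Set.toFinite _)
  have := hmax hDm hle
  exact Set.eq_of_subset_of_ncard_le hMD this (Set.toFinite _)

/-- all elements of a chain list reach the head -/
lemma chain_rtg_head : ∀ (l : List α) (a : α), List.Chain' G.Adj (a :: l) →
    ∀ b ∈ a :: l, RTG G {p | p ∈ a :: l} b a := by
  intro l
  induction l with
  | nil =>
    intro a _ b hb
    simp only [List.mem_singleton] at hb
    subst hb; exact Relation.ReflTransGen.refl
  | cons c t ih =>
    intro a hch b hb
    have hch' : List.Chain' G.Adj (c :: t) := hch.tail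
    have hadj : G.Adj a c := (List.isChain_cons_cons.mp hch).1
    rcases List.mem_cons.mp hb with rfl | hb'
    · exact Relation.ReflTransGen.refl
    · have step : RTG G {p | p ∈ a :: c :: t} c a :=
        Relation.ReflTransGen.single ⟨by simp, by simp, hadj.symm⟩
      have := ih c hch' b hb'
      exact (rtg_mono (by intro p hp; simp at hp ⊢; tauto) this).trans step

lemma chain_conn {l : List α} (hne : l ≠ []) (hch : List.Chain' G.Adj l) :
    (G.induce {p | p ∈ l}).Connected := by
  obtain ⟨a, t, rfl⟩ := List.exists_cons_of_ne_nil hne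
  refine conn_of_rtg ⟨a, by simp⟩ (fun p hp q hq => ?_)
  exact (chain_rtg_head t a hch p hp).trans (rtg_symm (chain_rtg_head t a hch q hq))

lemma cycle_goodSet {l : List α} (hne : l ≠ []) (hnd : l.Nodup)
    (hch : List.Chain' G.Adj l)
    (hcl : ∀ a ∈ l.getLast?, ∀ b ∈ l.head?, G.Adj a b) :
    GoodSet G {p | p ∈ l} := by
  refine ⟨⟨l.head hne, by simp [List.head_mem]⟩, chain_conn hne hch, ?_⟩
  intro p hp hrem
  simp only [Set.mem_setOf_eq] at hp
  obtain ⟨l₁, l₂, rfl⟩ := List.append_of_mem hp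
  have hnd1 : p ∉ l₁ := by
    intro h
    exact (List.disjoint_of_nodup_append hnd) h (by simp)
  have hnd2 : p ∉ l₂ := by
    have := hnd.of_append_right
    exact (List.nodup_cons.mp this).1
  have hset : {q | q ∈ l₁ ++ p :: l₂} \ {p} = {q | q ∈ l₂ ++ l₁} := by
    ext q
    simp only [Set.mem_diff, Set.mem_setOf_eq, List.mem_append, List.mem_cons,
      Set.mem_singleton_iff]
    constructor
    · rintro ⟨h | (rfl | h), hq⟩
      · exact Or.inr h
      · exact absurd rfl hq
      · exact Or.inl h
    · rintro (h | h)
      · exact ⟨Or.inr (Or.inr h), fun e => hnd2 (e ▸ h)⟩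
      · exact ⟨Or.inl h, fun e => hnd1 (e ▸ h)⟩
  rw [hset]
  rw [hset] at hrem
  have hlne : l₂ ++ l₁ ≠ [] := by
    intro h
    rcases List.append_eq_nil_iff.mp h with ⟨rfl, rfl⟩
    simp at hrem
  refine chain_conn hlne ?_
  unfold List.Chain' at hch ⊢
  rw [List.isChain_append] at hch ⊢
  obtain ⟨hc1, hc2, hj⟩ := hch
  have hc2' := hc2.tail
  refine ⟨hc2', hc1, ?_⟩
  intro x hx y hy
  have hl₂ne : l₂ ≠ [] := by intro h; subst h; simp at hx
  have hl₁ne : l₁ ≠ [] := by intro h; subst h; simp at hy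
  apply hcl
  · rw [List.getLast?_append_cons]
    exact List.mem_getLast?_cons hx
  · rw [List.head?_append_of_ne_nil l₁ hl₁ne]
    exact hy

lemma mem_of_getLast? {l : List α} {a : α} (h : l.getLast? = some a) : a ∈ l := by
  obtain ⟨h', rfl⟩ := List.mem_getLast?_eq_getLast h
  exact List.getLast_mem h'

lemma mem_of_head? {l : List α} {a : α} (h : l.head? = some a) : a ∈ l :=
  List.mem_of_mem_head? h

end GraphAux

lemma pair_eq_pair {X : Type} {a b x y : X} (hab : a ≠ b) (h : ({a, b} : Set X) = {x, y}) :
    (a = x ∧ b = y) ∨ (a = y ∧ b = x) := by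
  have ha : a ∈ ({x, y} : Set X) := h ▸ Set.mem_insert a {b}
  have hb : b ∈ ({x, y} : Set X) := h ▸ Set.mem_insert_of_mem a rfl
  simp only [Set.mem_insert_iff, Set.mem_singleton_iff] at ha hb
  rcases ha with ha | ha
  · rcases hb with hb | hb
    · exact absurd (ha.trans hb.symm) hab
    · exact Or.inl ⟨ha, hb⟩
  · rcases hb with hb | hb
    · exact Or.inr ⟨ha, hb⟩
    · exact absurd (ha.trans hb.symm) hab

namespace XTree

variable {X V : Type} (T : XTree X V)

lemma desc_refl (v : V) : T.Desc v v := ⟨0, rfl⟩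

lemma desc_trans {u v w : V} (h1 : T.Desc u v) (h2 : T.Desc v w) : T.Desc u w := by
  obtain ⟨n, hn⟩ := h1; obtain ⟨m, hm⟩ := h2
  exact ⟨n + m, by rw [Function.iterate_add_apply, hm, hn]⟩

lemma root_fix (k : ℕ) : T.parent^[k] T.root = T.root := by
  induction k with
  | zero => rfl
  | succ n ih => rw [Function.iterate_succ_apply', ih, T.parent_root]

lemma periodic_eq_root {v : V} {k : ℕ} (hk : 1 ≤ k) (h : T.parent^[k] v = v) : v = T.root := by
  obtain ⟨N, hN⟩ := T.reaches v
  have hmult : ∀ m : ℕ, T.parent^[m * k] v = v := by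
    intro m
    induction m with
    | zero => simp
    | succ n ih => rw [Nat.succ_mul, Function.iterate_add_apply, h, ih]
  have hv : T.parent^[N * k] v = v := hmult N
  have hle : N ≤ N * k := Nat.le_mul_of_pos_right N hk
  obtain ⟨d, hd⟩ := Nat.exists_eq_add_of_le hle
  rw [hd, add_comm, Function.iterate_add_apply, hN] at hv
  rw [← hv, root_fix]

lemma desc_antisymm {u v : V} (h1 : T.Desc u v) (h2 : T.Desc v u) : u = v := by
  obtain ⟨n, hn⟩ := h1; obtain ⟨m, hm⟩ := h2
  rcases Nat.eq_zero_or_pos (m + n) with h | h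
  · obtain ⟨hm0, hn0⟩ := Nat.add_eq_zero.mp h
    subst hm0; exact hm
  · have hper : T.parent^[m + n] v = v := by
      rw [Function.iterate_add_apply, hn, hm]
    have hroot := T.periodic_eq_root h hper
    subst hroot
    rw [root_fix] at hn
    exact hn.symm

lemma desc_comparable {u u' w : V} (h1 : T.Desc u w) (h2 : T.Desc u' w) :
    T.Desc u u' ∨ T.Desc u' u := by
  obtain ⟨n, hn⟩ := h1; obtain ⟨m, hm⟩ := h2
  rcases le_total n m with h | h
  · right
    obtain ⟨d, rfl⟩ := Nat.exists_eq_add_of_le h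
    exact ⟨d, by rw [← hn, ← Function.iterate_add_apply, Nat.add_comm]; exact hm⟩
  · left
    obtain ⟨d, rfl⟩ := Nat.exists_eq_add_of_le h
    exact ⟨d, by rw [← hm, ← Function.iterate_add_apply, Nat.add_comm]; exact hn⟩

lemma desc_of_child {v c : V} (hc : c ∈ T.children v) : T.Desc v c := ⟨1, hc.1⟩

lemma leafSet_child_subset {v c : V} (hc : c ∈ T.children v) : T.leafSet c ⊆ T.leafSet v :=
  fun _ hx => T.desc_trans (T.desc_of_child hc) hx

lemma children_desc_disjoint {v c₁ c₂ w : V} (h1 : c₁ ∈ T.children v) (h2 : c₂ ∈ T.children v)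
    (hw1 : T.Desc c₁ w) (hw2 : T.Desc c₂ w) : c₁ = c₂ := by
  have main : ∀ d₁ d₂ : V, d₁ ∈ T.children v → d₂ ∈ T.children v → T.Desc d₁ d₂ → d₁ = d₂ := by
    intro d₁ d₂ hd₁ hd₂ hdesc
    obtain ⟨k, hk⟩ := hdesc
    rcases Nat.eq_zero_or_pos k with rfl | hpos
    · exact hk.symm
    · obtain ⟨k', rfl⟩ := Nat.exists_eq_add_of_le hpos
      rw [Nat.add_comm, Function.iterate_add_apply, Function.iterate_one, hd₂.1] at hk
      rcases Nat.eq_zero_or_pos k' with rfl | hpos'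
      · exact absurd hk.symm hd₁.2
      · have hper : T.parent^[k' + 1] v = v := by
          rw [Function.iterate_succ_apply', hk]
          exact hd₁.1
        have hroot := T.periodic_eq_root (Nat.le_add_left 1 k') hper
        rw [hroot, root_fix] at hk
        exact absurd (hk.symm.trans hroot.symm) hd₁.2
  rcases T.desc_comparable hw1 hw2 with h | h
  · exact main c₁ c₂ h1 h2 h
  · exact (main c₂ c₁ h2 h1 h).symm

lemma children_leafSet_disjoint {v c₁ c₂ : V} (h1 : c₁ ∈ T.children v) (h2 : c₂ ∈ T.children v)
    {x : X} (hx1 : x ∈ T.leafSet c₁) (hx2 : x ∈ T.leafSet c₂) : c₁ = c₂ :=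
  T.children_desc_disjoint h1 h2 hx1 hx2

lemma exists_child_desc {v u : V} (h : T.Desc v u) (hne : u ≠ v) :
    ∃ c ∈ T.children v, T.Desc c u := by
  have key : ∀ n (u : V), T.parent^[n] u = v → u ≠ v → ∃ c ∈ T.children v, T.Desc c u := by
    intro n
    induction n with
    | zero => intro u hn hne; exact absurd hn hne
    | succ n ih =>
      intro u hn hne
      rw [Function.iterate_succ_apply'] at hn
      by_cases hw : T.parent^[n] u = v
      · exact ih u hw hne
      · refine ⟨T.parent^[n] u, ⟨hn, hw⟩, ⟨n, rfl⟩⟩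
  obtain ⟨n, hn⟩ := h
  exact key n u hn hne

lemma leaf_no_strict_desc {v w : V} (hleaf : v ∈ Set.range T.leaf) (h : T.Desc v w) : w = v := by
  have hl := (T.leaf_iff v).mpr hleaf
  have key : ∀ n (w : V), T.parent^[n] w = v → w = v := by
    intro n
    induction n with
    | zero => intro w hn; exact hn
    | succ n ih =>
      intro w hn
      rw [Function.iterate_succ_apply] at hn
      have hw := ih _ hn
      exact hl _ hw
  obtain ⟨n, hn⟩ := h
  exact key n w hn

lemma leafSet_of_leaf {v : V} (hleaf : v ∈ Set.range T.leaf) {a b : X}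
    (ha : a ∈ T.leafSet v) (hb : b ∈ T.leafSet v) : a = b := by
  have h1 : T.leaf a = v := T.leaf_no_strict_desc hleaf ha
  have h2 : T.leaf b = v := T.leaf_no_strict_desc hleaf hb
  exact T.leaf_inj (h1.trans h2.symm)

lemma interior_has_child (v : V) (hint : T.Interior v) : ∃ c, c ∈ T.children v := by
  by_contra h
  push_neg at h
  refine hint ((T.leaf_iff v).mp (fun w hw => ?_))
  by_contra hne
  exact (h w) ⟨hw, hne⟩

lemma descSet_child_lt [Fintype V] {v c : V} (hc : c ∈ T.children v) :
    ({w | T.Desc c w}).ncard < ({w | T.Desc v w}).ncard := by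
  apply Set.ncard_lt_ncard _ (Set.toFinite _)
  constructor
  · intro w hw
    exact T.desc_trans (T.desc_of_child hc) hw
  · intro hsub
    have : T.Desc c v := hsub (T.desc_refl v)
    exact hc.2 (T.desc_antisymm this (T.desc_of_child hc))

end XTree

section LassoAux

variable {X V : Type} (T : XTree X V) (L : Set (Set X))

/-- within the leaf set of any vertex, any two leaves are joined by a nodup chain of cords -/
lemma pathIn [Fintype V] (hlasso : T.IsTopoLasso L) :
    ∀ (u : V) (a b : X), a ∈ T.leafSet u → b ∈ T.leafSet u →
    ∃ l : List X, l ≠ [] ∧ l.Nodup ∧ List.Chain' (cordGraph L).Adj l ∧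
      l.head? = some a ∧ l.getLast? = some b ∧ ∀ p ∈ l, p ∈ T.leafSet u := by
  have key : ∀ n (u : V), ({w | T.Desc u w}).ncard ≤ n → ∀ a b : X,
      a ∈ T.leafSet u → b ∈ T.leafSet u →
      ∃ l : List X, l ≠ [] ∧ l.Nodup ∧ List.Chain' (cordGraph L).Adj l ∧
        l.head? = some a ∧ l.getLast? = some b ∧ ∀ p ∈ l, p ∈ T.leafSet u := by
    intro n
    induction n with
    | zero =>
      intro u hn a b ha hb
      exfalso
      have hmem : u ∈ {w | T.Desc u w} := T.desc_refl u
      have hpos := (Set.ncard_pos (Set.toFinite _)).mpr ⟨u, hmem⟩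
      omega
    | succ n ih =>
      intro u hn a b ha hb
      rcases eq_or_ne a b with rfl | hab
      · exact ⟨[a], by simp, by simp, List.isChain_singleton a, by simp, by simp, by simpa using ha⟩
      · have hint : u ∉ Set.range T.leaf := by
          intro hleaf
          exact hab (T.leafSet_of_leaf hleaf ha hb)
        have hca : ∃ c ∈ T.children u, a ∈ T.leafSet c := by
          refine T.exists_child_desc ha (fun h => hint ⟨a, h⟩)
        have hcb : ∃ c ∈ T.children u, b ∈ T.leafSet c := by
          refine T.exists_child_desc hb (fun h => hint ⟨b, h⟩)
        obtain ⟨ca, hca1, hca2⟩ := hca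
        obtain ⟨cb, hcb1, hcb2⟩ := hcb
        have hihc : ∀ (c : V), c ∈ T.children u → ({w | T.Desc c w}).ncard ≤ n := by
          intro c hc
          have := T.descSet_child_lt hc
          omega
        rcases eq_or_ne ca cb with rfl | hcc
        · obtain ⟨l, h1, h2, h3, h4, h5, h6⟩ := ih ca (hihc ca hca1) a b hca2 hcb2
          exact ⟨l, h1, h2, h3, h4, h5, fun p hp => T.leafSet_child_subset hca1 (h6 p hp)⟩
        · obtain ⟨p, q, hp, hq, hpq⟩ := hlasso u ca cb hca1 hcb1 hcc
          obtain ⟨l₁, h1a, h1b, h1c, h1d, h1e, h1f⟩ := ih ca (hihc ca hca1) a p hca2 hp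
          obtain ⟨l₂, h2a, h2b, h2c, h2d, h2e, h2f⟩ := ih cb (hihc cb hcb1) q b hq hcb2
          have hdisj : ∀ t, t ∈ l₁ → t ∉ l₂ := by
            intro t ht1 ht2
            exact hcc (T.children_leafSet_disjoint hca1 hcb1 (h1f t ht1) (h2f t ht2))
          have hpqne : p ≠ q := by
            intro h
            exact hcc (T.children_leafSet_disjoint hca1 hcb1 hp (h ▸ hq))
          refine ⟨l₁ ++ l₂, by simp [h1a], List.Nodup.append h1b h2b hdisj, ?_, ?_, ?_, ?_⟩
          · unfold List.Chain'
            rw [List.isChain_append]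
            refine ⟨h1c, h2c, fun x hx y hy => ?_⟩
            rw [h1e] at hx
            rw [h2d] at hy
            simp only [Option.mem_def, Option.some_inj] at hx hy
            subst hx; subst hy
            exact ⟨hpqne, hpq⟩
          · rw [List.head?_append_of_ne_nil l₁ h1a]
            exact h1d
          · rw [List.getLast?_append_of_ne_nil l₁ h2a]
            exact h2e
          · intro t ht
            rcases List.mem_append.mp ht with h | h
            · exact T.leafSet_child_subset hca1 (h1f t h)
            · exact T.leafSet_child_subset hcb1 (h2f t h)
  intro u a b ha hb
  exact key _ u le_rfl a b ha hb

/-- every cord of a minimal topological lasso is the unique cord joining some pair of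
child subtrees -/
lemma cord_unique (hmin : T.IsMinTopoLasso L) {e : Set X} (he : e ∈ L) :
    ∃ (w d₁ d₂ : V) (p q : X), d₁ ∈ T.children w ∧ d₂ ∈ T.children w ∧ d₁ ≠ d₂ ∧
      p ∈ T.leafSet d₁ ∧ q ∈ T.leafSet d₂ ∧ e = {p, q} ∧
      ∀ a b : X, a ∈ T.leafSet d₁ → b ∈ T.leafSet d₂ → ({a, b} : Set X) ∈ L →
        ({a, b} : Set X) = e := by
  obtain ⟨hlasso, hminimal⟩ := hmin
  have hnot : ¬ T.IsTopoLasso (L \ {e}) := by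
    intro h
    have := hminimal (L \ {e}) Set.diff_subset h
    have : e ∈ L \ {e} := this.symm ▸ he
    exact this.2 rfl
  rw [XTree.IsTopoLasso] at hnot
  push_neg at hnot
  obtain ⟨w, d₁, d₂, hd₁, hd₂, hdd, hnone⟩ := hnot
  obtain ⟨p, q, hp, hq, hpq⟩ := hlasso w d₁ d₂ hd₁ hd₂ hdd
  have hpqe : ({p, q} : Set X) = e := by
    by_contra hne
    exact hnone p q hp hq ⟨hpq, hne⟩
  refine ⟨w, d₁, d₂, p, q, hd₁, hd₂, hdd, hp, hq, hpqe.symm, ?_⟩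
  intro a b ha hb hab
  by_contra hne
  exact hnone a b ha hb ⟨hab, hne⟩

end LassoAux

/-- for a minimal topological lasso `L` with `Γ(L)` a block graph and an
interior vertex `v` with block `B_v`, the map sending `x ∈ V(B_v)` to the child of `v`
whose subtree contains `x` is a graph isomorphism from `B_v` onto `G(L,v)`. -/
theorem stmt13 {X V : Type} [Fintype X] [Fintype V] (T : XTree X V)
    (hph : T.IsPhylo) (hX : 3 ≤ Fintype.card X)
    (L : Set (Set X)) (hc : ∀ c ∈ L, IsCord c) (hcov : ∀ x : X, ∃ c ∈ L, x ∈ c)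
    (hmin : T.IsMinTopoLasso L) (hbg : IsBlockGraph (cordGraph L))
    (v : V) (hv : T.Interior v) (B : Set X)
    (hB : IsBlock (cordGraph L) B) (hlca : T.IsLCA v (T.leaf '' B)) :
    ∃ φ : {x : X // x ∈ B} → {c : V // c ∈ T.children v},
      (∀ x : {x : X // x ∈ B}, (x : X) ∈ T.leafSet ((φ x) : V)) ∧
      Function.Bijective φ ∧
      ∀ x y : {x : X // x ∈ B},
        ((cordGraph L).induce B).Adj x y ↔ (childGraph T L v).Adj (φ x) (φ y) := by
  classical
  have hBclique : (cordGraph L).IsClique B := hbg B hB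
  have hBgood := hB.1
  have hBmax := hB.2
  have hdesc : ∀ x : {x : X // x ∈ B}, T.Desc v (T.leaf (x : X)) := by
    intro x
    exact hlca.1 (T.leaf (x : X)) ⟨(x : X), x.2, rfl⟩
  have hexists : ∀ x : {x : X // x ∈ B}, ∃ c, c ∈ T.children v ∧ (x : X) ∈ T.leafSet c := by
    intro x
    obtain ⟨c, hc1, hc2⟩ := T.exists_child_desc (hdesc x) (fun h => hv ⟨(x : X), h⟩)
    exact ⟨c, hc1, hc2⟩
  choose ch hch1 hch2 using hexists
  -- injectivity core : distinct elements of B lie in distinct child subtrees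
  have main1 : ∀ x y : {x : X // x ∈ B}, (x : X) ≠ (y : X) → ch x ≠ ch y := by
    intro x y hxy hcc
    have hnotall : ¬ ∀ z ∈ B, z ∈ T.leafSet (ch x) := by
      intro hall
      have hanc : T.Desc (ch x) v := hlca.2 (ch x) (by rintro w ⟨z, hz, rfl⟩; exact hall z hz)
      exact (hch1 x).2 (T.desc_antisymm hanc (T.desc_of_child (hch1 x)))
    push_neg at hnotall
    obtain ⟨z, hzB, hznot⟩ := hnotall
    have hxzne : (x : X) ≠ z := fun h => hznot (h ▸ hch2 x)
    have hyzne : (y : X) ≠ z := fun h => hznot (by rw [← h, hcc]; exact hch2 y)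
    have hxz : ({(x : X), z} : Set X) ∈ L := (hBclique x.2 hzB hxzne).2
    have hyz : ({(y : X), z} : Set X) ∈ L := (hBclique y.2 hzB hyzne).2
    obtain ⟨w, d₁, d₂, p, q, hd₁, hd₂, hdd, hp, hq, hepq, huniq⟩ := cord_unique T L hmin hxz
    have key : ∀ e₁ e₂ : V, e₁ ∈ T.children w → e₂ ∈ T.children w → e₁ ≠ e₂ →
        (x : X) ∈ T.leafSet e₁ → z ∈ T.leafSet e₂ →
        (∀ a b : X, a ∈ T.leafSet e₁ → b ∈ T.leafSet e₂ → ({a, b} : Set X) ∈ L →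
          ({a, b} : Set X) = {(x : X), z}) → False := by
      intro e₁ e₂ he₁ he₂ hee hxe hze huq
      have hwx : T.Desc w (T.leaf (x : X)) := T.desc_trans (T.desc_of_child he₁) hxe
      have hvx : T.Desc v (T.leaf (x : X)) := hdesc x
      have hwv : w = v := by
        rcases T.desc_comparable hvx hwx with h | h
        · rcases eq_or_ne w v with h' | h'
          · exact h'
          · exfalso
            obtain ⟨e, he, hew⟩ := T.exists_child_desc h h'
            have hxch : (x : X) ∈ T.leafSet e := T.desc_trans hew hwx
            have hech : e = ch x := T.children_leafSet_disjoint he (hch1 x) hxch (hch2 x)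
            have hzw : T.Desc w (T.leaf z) := T.desc_trans (T.desc_of_child he₂) hze
            exact hznot (hech ▸ (T.desc_trans hew hzw))
        · rcases eq_or_ne v w with h' | h'
          · exact h'.symm
          · exfalso
            obtain ⟨e, he, hev⟩ := T.exists_child_desc h h'
            have h1 : e = e₁ := T.children_leafSet_disjoint he he₁ (T.desc_trans hev hvx) hxe
            have h2 : e = e₂ := T.children_leafSet_disjoint he he₂
              (T.desc_trans hev (hlca.1 (T.leaf z) ⟨z, hzB, rfl⟩)) hze
            exact hee (h1 ▸ h2)
      subst hwv
      have hd₁x : e₁ = ch x := T.children_leafSet_disjoint he₁ (hch1 x) hxe (hch2 x)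
      have hye : (y : X) ∈ T.leafSet e₁ := by
        rw [hd₁x, hcc]; exact hch2 y
      have hcontr := huq (y : X) z hye hze hyz
      rcases pair_eq_pair hyzne hcontr with ⟨h1, h2⟩ | ⟨h1, h2⟩
      · exact hxy h1.symm
      · exact hyzne h1
    rcases pair_eq_pair hxzne hepq with ⟨h1, h2⟩ | ⟨h1, h2⟩
    · exact key d₁ d₂ hd₁ hd₂ hdd (h1.symm ▸ hp) (h2.symm ▸ hq)
        (fun a b ha hb hab => huniq a b ha hb hab)
    · refine key d₂ d₁ hd₂ hd₁ hdd.symm (h1.symm ▸ hq) (h2.symm ▸ hp) ?_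
      intro a b ha hb hab
      rw [Set.pair_comm a b]
      exact huniq b a hb ha (by rw [Set.pair_comm b a]; exact hab)
  -- surjectivity core : every child subtree of v meets B
  have main2 : ∀ d ∈ T.children v, ∃ x : {x : X // x ∈ B}, (x : X) ∈ T.leafSet d := by
    intro d hd
    by_contra hcon
    push_neg at hcon
    obtain ⟨x₀, hx₀⟩ := hBgood.1
    have htwo : ∃ y ∈ B, y ≠ x₀ := by
      by_contra h
      push_neg at h
      obtain ⟨c0, hc0L, hx0c⟩ := hcov x₀
      obtain ⟨a, b, hab, habe⟩ := hc c0 hc0L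
      have hx0ab : x₀ = a ∨ x₀ = b := by
        rw [habe] at hx0c; simpa using hx0c
      obtain ⟨t, htne, htL⟩ : ∃ t, t ≠ x₀ ∧ ({x₀, t} : Set X) ∈ L := by
        have habL : ({a, b} : Set X) ∈ L := habe ▸ hc0L
        rcases hx0ab with rfl | rfl
        · exact ⟨b, fun hh => hab hh.symm, habL⟩
        · exact ⟨a, fun hh => hab hh, by rwa [Set.pair_comm a x₀] at habL⟩
      have hgood : GoodSet (cordGraph L) {x₀, t} := by
        apply clique_goodSet ⟨x₀, Set.mem_insert x₀ {t}⟩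
        intro p hp q hq hpq
        simp only [Set.mem_insert_iff, Set.mem_singleton_iff] at hp hq
        have hadj : (cordGraph L).Adj x₀ t := ⟨fun hh => htne hh.symm, htL⟩
        rcases hp with hp | hp <;> rcases hq with hq | hq
        · exact absurd (hp.trans hq.symm) hpq
        · rw [hp, hq]; exact hadj
        · rw [hp, hq]; exact hadj.symm
        · exact absurd (hp.trans hq.symm) hpq
      have hsub : B ⊆ {x₀, t} := fun z hz => Set.mem_insert_iff.mpr (Or.inl (h z hz))
      have heq := hBmax _ hgood hsub
      have htB : t ∈ B := by rw [heq]; exact Set.mem_insert_of_mem x₀ rfl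
      exact htne (h t htB)
    obtain ⟨y₀, hy₀B, hy₀ne⟩ := htwo
    set xs : {x : X // x ∈ B} := ⟨x₀, hx₀⟩ with hxs
    set ys : {x : X // x ∈ B} := ⟨y₀, hy₀B⟩ with hys
    have hxyne : (xs : X) ≠ (ys : X) := fun hh => hy₀ne.symm hh
    have hchne : ch xs ≠ ch ys := main1 xs ys hxyne
    have hcxd : ch xs ≠ d := fun h' => hcon xs (h' ▸ hch2 xs)
    have hcyd : ch ys ≠ d := fun h' => hcon ys (h' ▸ hch2 ys)
    obtain ⟨ax, bx, hax, hbx, haxbx⟩ := hmin.1 v (ch xs) d (hch1 xs) hd hcxd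
    obtain ⟨ay, bb, hay, hby, hayby⟩ := hmin.1 v (ch ys) d (hch1 ys) hd hcyd
    obtain ⟨l₁, h1a, h1b, h1c, h1d, h1e, h1f⟩ :=
      pathIn T L hmin.1 (ch xs) (xs : X) ax (hch2 xs) hax
    obtain ⟨l₂, h2a, h2b, h2c, h2d, h2e, h2f⟩ := pathIn T L hmin.1 d bx bb hbx hby
    obtain ⟨l₃, h3a, h3b, h3c, h3d, h3e, h3f⟩ :=
      pathIn T L hmin.1 (ch ys) ay (ys : X) hay (hch2 ys)
    -- distinctness of elements of distinct subtrees
    have hdisj : ∀ (c c' : V), c ∈ T.children v → c' ∈ T.children v → c ≠ c' →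
        ∀ s s' : X, s ∈ T.leafSet c → s' ∈ T.leafSet c' → s ≠ s' := by
      intro c c' hcm hcm' hne s s' hs hs' hss
      exact hne (T.children_leafSet_disjoint hcm hcm' hs (hss ▸ hs'))
    have hd12 : ∀ t ∈ l₁, t ∉ l₂ :=
      fun t ht ht' => hdisj _ _ (hch1 xs) hd hcxd t t (h1f t ht) (h2f t ht') rfl
    have hd13 : ∀ t ∈ l₁, t ∉ l₃ :=
      fun t ht ht' => hdisj _ _ (hch1 xs) (hch1 ys) hchne t t (h1f t ht) (h3f t ht') rfl
    have hd23 : ∀ t ∈ l₂, t ∉ l₃ :=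
      fun t ht ht' => hdisj _ _ hd (hch1 ys) (Ne.symm hcyd) t t (h2f t ht) (h3f t ht') rfl
    have hl23ne : l₂ ++ l₃ ≠ [] := by simp [h2a]
    have hnodup : (l₁ ++ (l₂ ++ l₃)).Nodup := by
      refine List.Nodup.append h1b (List.Nodup.append h2b h3b hd23) ?_
      intro t ht ht'
      rcases List.mem_append.mp ht' with h' | h'
      · exact hd12 t ht h'
      · exact hd13 t ht h'
    have hchain : List.Chain' (cordGraph L).Adj (l₁ ++ (l₂ ++ l₃)) := by
      unfold List.Chain'
      rw [List.isChain_append]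
      refine ⟨h1c, ?_, ?_⟩
      · rw [List.isChain_append]
        refine ⟨h2c, h3c, ?_⟩
        intro p hp q hq
        rw [h2e] at hp; rw [h3d] at hq
        simp only [Option.mem_def, Option.some_inj] at hp hq
        subst hp; subst hq
        refine ⟨hdisj _ _ hd (hch1 ys) (Ne.symm hcyd) _ _ hby hay, ?_⟩
        rwa [Set.pair_comm bb ay]
      · intro p hp q hq
        rw [h1e] at hp
        rw [List.head?_append_of_ne_nil l₂ h2a, h2d] at hq
        simp only [Option.mem_def, Option.some_inj] at hp hq
        subst hp; subst hq
        exact ⟨hdisj _ _ (hch1 xs) hd hcxd _ _ hax hbx, haxbx⟩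
    have hhead : (l₁ ++ (l₂ ++ l₃)).head? = some (xs : X) := by
      rw [List.head?_append_of_ne_nil l₁ h1a]; exact h1d
    have hlast : (l₁ ++ (l₂ ++ l₃)).getLast? = some (ys : X) := by
      rw [List.getLast?_append_of_ne_nil l₁ hl23ne, List.getLast?_append_of_ne_nil l₂ h3a]
      exact h3e
    have hCgood : GoodSet (cordGraph L) {p | p ∈ l₁ ++ (l₂ ++ l₃)} := by
      refine cycle_goodSet (by simp [h1a]) hnodup hchain ?_
      intro a' ha' b' hb'
      rw [hlast] at ha'; rw [hhead] at hb'
      simp only [Option.mem_def, Option.some_inj] at ha' hb'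
      subst ha'; subst hb'
      exact hBclique hy₀B hx₀ hy₀ne
    obtain ⟨M, hMblock, hCM⟩ := exists_block hCgood
    have hMcl := hbg M hMblock
    have hxl : (xs : X) ∈ l₁ ++ (l₂ ++ l₃) := mem_of_head? hhead
    have hyl : (ys : X) ∈ l₁ ++ (l₂ ++ l₃) := mem_of_getLast? hlast
    have hbbl : bb ∈ l₁ ++ (l₂ ++ l₃) :=
      List.mem_append.mpr (Or.inr (List.mem_append.mpr (Or.inl (mem_of_getLast? h2e))))
    have hbbx : (cordGraph L).Adj bb x₀ :=
      hMcl (hCM hbbl) (hCM hxl) (hdisj _ _ hd (hch1 xs) (Ne.symm hcxd) _ _ hby (hch2 xs))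
    have hbby : (cordGraph L).Adj bb y₀ :=
      hMcl (hCM hbbl) (hCM hyl) (hdisj _ _ hd (hch1 ys) (Ne.symm hcyd) _ _ hby (hch2 ys))
    have hbbB : bb ∉ B := fun h' => hcon ⟨bb, h'⟩ hby
    have hins := goodSet_insert hBgood hbbB hx₀ hy₀B hy₀ne.symm hbbx hbby
    have heq := hBmax _ hins Set.subset_union_left
    exact hbbB (by rw [heq]; exact Or.inr rfl)
  -- assemble the isomorphism
  refine ⟨fun x => ⟨ch x, hch1 x⟩, fun x => hch2 x, ⟨?_, ?_⟩, ?_⟩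
  · intro x y h
    by_contra hne
    exact main1 x y (fun hh => hne (Subtype.ext hh)) (congrArg Subtype.val h)
  · intro c
    obtain ⟨x, hx⟩ := main2 c.1 c.2
    exact ⟨x, Subtype.ext (T.children_leafSet_disjoint (hch1 x) c.2 (hch2 x) hx)⟩
  · intro x y
    constructor
    · intro h
      have hadj : (cordGraph L).Adj (x : X) (y : X) := by
        simpa [SimpleGraph.comap_adj] using h
      refine ⟨?_, (x : X), (y : X), hch2 x, hch2 y, hadj.2⟩
      intro hh
      exact main1 x y hadj.1 (congrArg Subtype.val hh)
    · rintro ⟨hne, -⟩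
      have hxy : (x : X) ≠ (y : X) := by
        intro hh
        exact hne (congrArg (fun t => (⟨ch t, hch1 t⟩ : {c : V // c ∈ T.children v}))
          (Subtype.ext hh))
      have hadj : (cordGraph L).Adj (x : X) (y : X) := hBclique x.2 y.2 hxy
      simpa [SimpleGraph.comap_adj] using hadj
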